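/- Let p be an odd prime, a ∈ F_p* a quadratic residue, and E: y^2 = x(x+a)^2 the singular cubic over F_p. A non-singular point P on E has order exactly 4 in the group of non-singular points if and only if P = (a, 2a·s) or P = (a, -2a·s), where s is a square root of a in F_p. -/

import Mathlib

open WeierstrassCurve.Affine WeierstrassCurve.Affine.Point in
theorem singular_cubic_order_four_points (p : ℕ) [hp : Fact p.Prime] (hodd : p % 2 = 1)
    (a s : ZMod p) (ha : a ≠ 0) (hs : s ^ 2 = a)
    (W : WeierstrassCurve.Affine (ZMod p)) (hW : W = ⟨0, 2 * a, 0, a ^ 2, 0⟩)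
    (x y : ZMod p) (h : W.Nonsingular x y) :
    addOrderOf (WeierstrassCurve.Affine.Point.some x y h) = 4 ↔
      (x = a ∧ (y = 2 * a * s ∨ y = -(2 * a * s))) := by
  have hWdef : W.a₁ = 0 ∧ W.a₂ = 2 * a ∧ W.a₃ = 0 ∧ W.a₄ = a ^ 2 ∧ W.a₆ = 0 := by
    subst hW; exact ⟨rfl, rfl, rfl, rfl, rfl⟩
  haveI : Fact (Nat.Prime 2) := ⟨Nat.prime_two⟩
  have hp2 : p ≠ 2 := fun hp' => by simp [hp'] at hodd
  have h2 : (2 : ZMod p) ≠ 0 := by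
    intro h0
    exact hp2 ((Nat.prime_dvd_prime_iff_eq hp.out Nat.prime_two).mp
      ((ZMod.natCast_eq_zero_iff 2 p).mp (by exact_mod_cast h0)))
  have hs0 : s ≠ 0 := fun h0 => ha (by rw [← hs, h0]; ring)
  have heq : y ^ 2 = x ^ 3 + 2 * a * x ^ 2 + a ^ 2 * x := by
    have := h.1
    rw [WeierstrassCurve.Affine.equation_iff] at this
    simp only [hWdef] at this
    linear_combination this
  have hnegY : ∀ u v : ZMod p, W.negY u v = -v := fun u v => by
    simp [WeierstrassCurve.Affine.negY, hWdef]
  have hyne : ∀ (u v : ZMod p), v ≠ 0 → v ≠ W.negY u v := by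
    intro u v hv hc
    rw [hnegY] at hc
    have h2v : 2 * v = 0 := by linear_combination hc
    exact hv ((mul_eq_zero.mp h2v).resolve_left h2)
  have haddX : ∀ L : ZMod p, W.addX x x L = L ^ 2 - 2 * a - 2 * x := by
    intro L
    simp only [WeierstrassCurve.Affine.addX, hWdef]
    ring
  have haddY : ∀ L : ZMod p,
      W.addY x x y L = -(L * (W.addX x x L - x) + y) := by
    intro L
    rw [WeierstrassCurve.Affine.addY, hnegY, WeierstrassCurve.Affine.negAddY]
  constructor
  · -- forward direction
    intro h4
    have hne2 : Point.some x y h + Point.some x y h ≠ 0 := by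
      intro hz
      have hd : addOrderOf (Point.some x y h) ∣ 2 :=
        addOrderOf_dvd_of_nsmul_eq_zero (by rw [two_nsmul]; exact hz)
      rw [h4] at hd
      norm_num at hd
    have hy' : y ≠ W.negY x y := fun hc => hne2 (add_self_of_Y_eq hc)
    have hy0 : y ≠ 0 := fun h0 => hy' (by rw [hnegY, h0, _root_.neg_zero])
    set L := W.slope x x y y with hLdef
    have hden : y - W.negY x y ≠ 0 := sub_ne_zero.mpr hy'
    have hL : L * (y - W.negY x y) = 3 * x ^ 2 + 4 * a * x + a ^ 2 := by
      rw [hLdef, slope_of_Y_ne rfl hy', div_mul_cancel₀ _ hden]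
      simp only [hWdef]
      ring
    have hL2 : L * (2 * y) = 3 * x ^ 2 + 4 * a * x + a ^ 2 := by
      rw [hnegY] at hL
      linear_combination hL
    have h3 : W.Nonsingular (W.addX x x L) (W.addY x x y L) :=
      nonsingular_add h h fun hc => hy' hc.2
    have hPP : Point.some x y h + Point.some x y h = Point.some _ _ h3 :=
      add_self_of_Y_ne hy'
    have h4P : Point.some _ _ h3 + Point.some _ _ h3 = 0 := by
      have h4n : (4 : ℕ) • Point.some x y h = 0 := by
        rw [← h4]; exact addOrderOf_nsmul_eq_zero _
      rw [← hPP]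
      have : (4 : ℕ) • Point.some x y h =
          (Point.some x y h + Point.some x y h) + (Point.some x y h + Point.some x y h) := by
        rw [show (4 : ℕ) = 2 + 2 by norm_num, add_nsmul, two_nsmul]
      rw [← this]
      exact h4n
    have hy3eq : W.addY x x y L = W.negY (W.addX x x L) (W.addY x x y L) := by
      by_contra hc
      exact some_ne_zero _ ((add_self_of_Y_ne hc).symm.trans h4P)
    have hy30 : W.addY x x y L = 0 := by
      rw [hnegY] at hy3eq
      have h2v : 2 * W.addY x x y L = 0 := by linear_combination hy3eq
      exact (mul_eq_zero.mp h2v).resolve_left h2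
    have heq3 : (W.addX x x L) ^ 3 + 2 * a * (W.addX x x L) ^ 2
        + a ^ 2 * (W.addX x x L) = 0 := by
      have := h3.1
      rw [WeierstrassCurve.Affine.equation_iff] at this
      simp only [hWdef] at this
      rw [hy30] at this
      linear_combination -this
    have hns3 : 3 * (W.addX x x L) ^ 2 + 4 * a * (W.addX x x L) + a ^ 2 ≠ 0 := by
      have := h3.2
      rw [WeierstrassCurve.Affine.evalEval_polynomialX,
        WeierstrassCurve.Affine.evalEval_polynomialY] at this
      simp only [hWdef, hy30] at this
      rcases this with hc | hc
      · intro h0; exact hc (by linear_combination -h0)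
      · exact absurd (by ring) hc
    have hx3a : W.addX x x L + a ≠ 0 := by
      intro hc
      apply hns3
      have hxval : W.addX x x L = -a := by linear_combination hc
      rw [hxval]; ring
    have hx30 : W.addX x x L = 0 := by
      have hfac : W.addX x x L * (W.addX x x L + a) ^ 2 = 0 := by
        linear_combination heq3
      rcases mul_eq_zero.mp hfac with h0 | h0
      · exact h0
      · exact absurd (pow_eq_zero_iff two_ne_zero |>.mp h0) hx3a
    have hLsq : L ^ 2 = 2 * a + 2 * x := by
      have := haddX L
      rw [hx30] at this
      linear_combination -this
    have key : ((x - a) * (x + a)) ^ 2 = 0 := by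
      linear_combination (-(L * (2 * y)) - (3 * x ^ 2 + 4 * a * x + a ^ 2)) * hL2
        + 4 * y ^ 2 * hLsq + 8 * (a + x) * heq
    have key2 : (x - a) * (x + a) = 0 := pow_eq_zero_iff two_ne_zero |>.mp key
    have hxa : x + a ≠ 0 := by
      intro hc
      apply hy0
      have hysq : y ^ 2 = 0 := by
        rw [heq]; linear_combination (x ^ 2 + a * x) * hc
      exact pow_eq_zero_iff two_ne_zero |>.mp hysq
    have hxeq : x = a := by
      rcases mul_eq_zero.mp key2 with h0 | h0
      · linear_combination h0
      · exact absurd h0 hxa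
    refine ⟨hxeq, ?_⟩
    have hy2 : y ^ 2 = 4 * a ^ 3 := by
      linear_combination heq + (x ^ 2 + 3 * a * x + 4 * a ^ 2) * hxeq
    have hfac : (y - 2 * a * s) * (y + 2 * a * s) = 0 := by
      linear_combination hy2 - 4 * a ^ 2 * hs
    rcases mul_eq_zero.mp hfac with h0 | h0
    · exact Or.inl (by linear_combination h0)
    · exact Or.inr (by linear_combination h0)
  · -- backward direction
    rintro ⟨hx, hy⟩
    have hy0 : y ≠ 0 := by
      rcases hy with rfl | rfl
      · exact mul_ne_zero (mul_ne_zero h2 ha) hs0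
      · exact neg_ne_zero.mpr (mul_ne_zero (mul_ne_zero h2 ha) hs0)
    have hy' : y ≠ W.negY x y := hyne x y hy0
    set L := W.slope x x y y with hLdef
    have hden : y - W.negY x y ≠ 0 := sub_ne_zero.mpr hy'
    have hL : L * (y - W.negY x y) = 3 * x ^ 2 + 4 * a * x + a ^ 2 := by
      rw [hLdef, slope_of_Y_ne rfl hy', div_mul_cancel₀ _ hden]
      simp only [hWdef]
      ring
    have hL2 : L * (2 * y) = 8 * a ^ 2 := by
      rw [hnegY] at hL
      linear_combination hL + (3 * x + 7 * a) * hx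
    have hy2 : y ^ 2 = 4 * a ^ 3 := by
      rcases hy with rfl | rfl
      · linear_combination 4 * a ^ 2 * hs
      · linear_combination 4 * a ^ 2 * hs
    have h4y : (4 : ZMod p) * y ^ 2 ≠ 0 := by
      apply mul_ne_zero _ (pow_ne_zero 2 hy0)
      intro h4z
      exact h2 ((mul_eq_zero.mp (by linear_combination h4z : (2 : ZMod p) * 2 = 0)).elim id id)
    have hx30 : W.addX x x L = 0 := by
      have h1 : W.addX x x L * (4 * y ^ 2) = 0 := by
        rw [haddX]
        linear_combination (L * (2 * y) + 8 * a ^ 2) * hL2 - 8 * (a + x) * hy2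
          - 32 * a ^ 3 * hx
      exact (mul_eq_zero.mp h1).resolve_right h4y
    have hy30 : W.addY x x y L = 0 := by
      have h1 : W.addY x x y L * (2 * y) = 0 := by
        rw [haddY, hx30]
        linear_combination x * hL2 - 2 * hy2 + 8 * a ^ 2 * hx
      exact (mul_eq_zero.mp h1).resolve_right (mul_ne_zero h2 hy0)
    have h3 : W.Nonsingular (W.addX x x L) (W.addY x x y L) :=
      nonsingular_add h h fun hc => hy' hc.2
    have hPP : Point.some x y h + Point.some x y h = Point.some _ _ h3 :=
      add_self_of_Y_ne hy'
    have h2P0 : Point.some _ _ h3 + Point.some _ _ h3 = 0 :=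
      add_self_of_Y_eq (by rw [hnegY, hy30, _root_.neg_zero])
    have hord := addOrderOf_eq_prime_pow (p := 2) (n := 1) (x := Point.some x y h)
      (by
        intro hz
        rw [pow_one, two_nsmul, hPP] at hz
        exact some_ne_zero _ hz)
      (by
        have hrw : (2 : ℕ) ^ (1 + 1) • Point.some x y h =
            (Point.some x y h + Point.some x y h) + (Point.some x y h + Point.some x y h) := by
          rw [show ((2 : ℕ) ^ (1 + 1)) = 2 + 2 by norm_num, add_nsmul, two_nsmul]
        rw [hrw, hPP]
        exact h2P0)
    rw [hord]
    norm_num
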